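/- Let G_1 and G_2 be finite groups. The homomorphism Br^2(G_1 × G_2) → Br^2(G_1) × Br^2(G_2), given on each factor by cohomological restriction along the inclusions G_1 ↪ G_1 × G_2 and G_2 ↪ G_1 × G_2, is well defined (restriction of an untwisted class to G_i is untwisted) and is an isomorphism of abelian groups. -/

import Mathlib

namespace DT

variable {G : Type*} [Group G]

/-- The (inhomogeneous bar) 2-cocycle identity for a `U(1)`-valued 2-cochain, written
multiplicatively: `ω(g₂,g₃)·ω(g₁,g₂g₃) = ω(g₁g₂,g₃)·ω(g₁,g₂)`. -/
def IsCocycle2 (ω : G → G → Circle) : Prop :=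
  ∀ g₁ g₂ g₃ : G, ω g₂ g₃ * ω g₁ (g₂ * g₃) = ω (g₁ * g₂) g₃ * ω g₁ g₂

/-- A `U(1)`-valued 2-coboundary: `ω(g₁,g₂) = α(g₂)·α(g₁g₂)⁻¹·α(g₁)`. -/
def IsCoboundary2 (ω : G → G → Circle) : Prop :=
  ∃ α : G → Circle, ∀ g₁ g₂ : G, ω g₁ g₂ = α g₂ * (α (g₁ * g₂))⁻¹ * α g₁

/-- A 2-cochain is untwisted if `ω(g,h) = ω(h,g)` for all commuting pairs. -/
def Untwisted2 (ω : G → G → Circle) : Prop :=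
  ∀ g h : G, g * h = h * g → ω g h = ω h g

end DT

namespace DT

variable (G : Type*) [Group G]

/-- The 2-cocycles, as a subgroup of the group of `U(1)`-valued 2-cochains. -/
noncomputable def cocycles2Sub : Subgroup (G → G → Circle) where
  carrier := {ω | IsCocycle2 ω}
  one_mem' := by intro g₁ g₂ g₃; simp
  mul_mem' := by
    intro ω ω' h h' g₁ g₂ g₃
    simp only [Pi.mul_apply]
    rw [mul_mul_mul_comm, h g₁ g₂ g₃, h' g₁ g₂ g₃, mul_mul_mul_comm]
  inv_mem' := by
    intro ω h g₁ g₂ g₃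
    simp only [Pi.inv_apply, ← mul_inv]
    rw [h g₁ g₂ g₃]

/-- The 2-coboundary map `α ↦ δα`, `(δα)(g₁,g₂) = α(g₂)·α(g₁g₂)⁻¹·α(g₁)`. -/
noncomputable def d1hom : (G → Circle) →* (G → G → Circle) where
  toFun α := fun g₁ g₂ => α g₂ * (α (g₁ * g₂))⁻¹ * α g₁
  map_one' := by funext g₁ g₂; simp
  map_mul' := by
    intro α β
    funext g₁ g₂
    simp only [Pi.mul_apply, mul_inv]
    group
    simp [mul_comm, mul_left_comm, mul_assoc]

/-- The 2-coboundaries, as a subgroup of the 2-cochains. -/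
noncomputable def coboundaries2Sub : Subgroup (G → G → Circle) := (d1hom G).range

/-- The untwisted 2-cocycles. -/
noncomputable def untwisted2Sub : Subgroup (G → G → Circle) where
  carrier := {ω | IsCocycle2 ω ∧ Untwisted2 ω}
  one_mem' := ⟨(cocycles2Sub G).one_mem, by intro g h _; rfl⟩
  mul_mem' := by
    intro ω ω' h h'
    exact ⟨(cocycles2Sub G).mul_mem h.1 h'.1, by
      intro g k hgk
      simp only [Pi.mul_apply, h.2 g k hgk, h'.2 g k hgk]⟩
  inv_mem' := by
    intro ω h
    exact ⟨(cocycles2Sub G).inv_mem h.1, by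
      intro g k hgk
      simp only [Pi.inv_apply, h.2 g k hgk]⟩

/-- `H²(G,U(1))`: 2-cocycles modulo 2-coboundaries. -/
def H2Grp := cocycles2Sub G ⧸ ((coboundaries2Sub G).subgroupOf (cocycles2Sub G))

noncomputable instance : CommGroup (H2Grp G) := by unfold H2Grp; infer_instance

/-- `Br²(G)`: the subgroup of `H²(G,U(1))` of classes of untwisted cocycles. -/
noncomputable def Br2Sub : Subgroup (H2Grp G) :=
  Subgroup.map (QuotientGroup.mk' ((coboundaries2Sub G).subgroupOf (cocycles2Sub G)))
    ((untwisted2Sub G).subgroupOf (cocycles2Sub G))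

variable {G}
variable {K : Type*} [Group K]

/-- Restriction of 2-cocycles along a group homomorphism. -/
noncomputable def res2Cocycle (f : K →* G) : cocycles2Sub G →* cocycles2Sub K where
  toFun ω := ⟨fun a b => (ω : G → G → Circle) (f a) (f b), by
    intro a b c
    simpa [map_mul] using ω.2 (f a) (f b) (f c)⟩
  map_one' := rfl
  map_mul' := fun _ _ => rfl

/-- The restriction map `H²(G,U(1)) →* H²(K,U(1))` induced by `f : K →* G`. -/
noncomputable def res2 (f : K →* G) : H2Grp G →* H2Grp K :=
  QuotientGroup.lift _
    ((QuotientGroup.mk' ((coboundaries2Sub K).subgroupOf (cocycles2Sub K))).comp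
      (res2Cocycle f))
    (by
      intro ω hω
      obtain ⟨α, hα⟩ := MonoidHom.mem_range.mp (Subgroup.mem_subgroupOf.mp hω)
      have hmem : res2Cocycle f ω ∈ (coboundaries2Sub K).subgroupOf (cocycles2Sub K) := by
        rw [Subgroup.mem_subgroupOf]
        refine MonoidHom.mem_range.mpr ⟨α ∘ f, ?_⟩
        funext a b
        have h2 := congrFun (congrFun hα (f a)) (f b)
        simpa [d1hom, res2Cocycle, map_mul] using h2
      exact (QuotientGroup.eq_one_iff _).mpr hmem)

end DT

section Aux

open DT

private lemma dt_key {G₁ G₂ : Type*} [Group G₁] [Group G₂]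
    (ω : G₁ × G₂ → G₁ × G₂ → Circle) (hω : IsCocycle2 ω)
    (hc : ∀ (b : G₁) (x : G₂), ω (1,x) (b,1) = ω (b,1) (1,x))
    (a b : G₁) (x y : G₂) :
    ω (a,x) (b,y) = ω (a,1) (b,1) * ω (1,x) (1,y) * ω (a*b,1) (1,x*y)
      * (ω (a,1) (1,x))⁻¹ * (ω (b,1) (1,y))⁻¹ := by
  have h1 := hω (a,x) (b,1) (1,y)
  have h2 := hω (a*b,1) (1,x) (1,y)
  have h3 := hω (a,1) (1,x) (b,1)
  have h4 := hω (a,1) (b,1) (1,x)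
  have h5 := hc b x
  simp only [Prod.mk_mul_mk, mul_one, one_mul] at h1 h2 h3 h4
  rw [← Circle.coe_inj] at h1 h2 h3 h4 h5 ⊢
  push_cast at h1 h2 h3 h4 h5 ⊢
  field_simp
  linear_combination (↑(ω (a,1) (1,x)) : ℂ) * h1 - (↑(ω (a,1) (b,1)):ℂ) * h2
    + (↑(ω (a*b,x) (1,y)):ℂ) * (↑(ω (a,1) (b,x)):ℂ) * h5
    - (↑(ω (a*b,x) (1,y)):ℂ) * h3 + (↑(ω (a*b,x) (1,y)):ℂ) * h4

private lemma dt_core {G₁ G₂ : Type*} [Group G₁] [Group G₂]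
    (ω : G₁ × G₂ → G₁ × G₂ → Circle) (hω : IsCocycle2 ω) (hu : Untwisted2 ω)
    (hcb1 : IsCoboundary2 (fun a b : G₁ => ω (a,1) (b,1)))
    (hcb2 : IsCoboundary2 (fun x y : G₂ => ω (1,x) (1,y))) :
    IsCoboundary2 ω := by
  obtain ⟨α₁, hα₁⟩ := hcb1
  obtain ⟨α₂, hα₂⟩ := hcb2
  refine ⟨fun g : G₁ × G₂ => α₁ g.1 * α₂ g.2 * (ω (g.1,1) (1,g.2))⁻¹, ?_⟩
  rintro ⟨a,x⟩ ⟨b,y⟩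
  have hc : ∀ (b : G₁) (x : G₂), ω (1,x) (b,1) = ω (b,1) (1,x) := fun b x =>
    hu (1,x) (b,1) (by simp [Prod.mk_mul_mk])
  have hk := dt_key ω hω hc a b x y
  simp only [Prod.mk_mul_mk]
  have hA : ω (a,1) (b,1) = α₁ b * (α₁ (a*b))⁻¹ * α₁ a := hα₁ a b
  have hB : ω (1,x) (1,y) = α₂ y * (α₂ (x*y))⁻¹ * α₂ x := hα₂ x y
  rw [hk, hA, hB]
  rw [← Circle.coe_inj]
  push_cast
  field_simp

private lemma dt_mem_cob_iff {G : Type*} [Group G] (ω : G → G → Circle) :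
    ω ∈ coboundaries2Sub G ↔ IsCoboundary2 ω := by
  constructor
  · rintro ⟨α, rfl⟩
    exact ⟨α, fun g₁ g₂ => rfl⟩
  · rintro ⟨α, hα⟩
    exact ⟨α, funext fun g₁ => funext fun g₂ => (hα g₁ g₂).symm⟩

end Aux

open DT in
/-- the map `Br²(G₁ × G₂) → Br²(G₁) × Br²(G₂)` given by the two
restrictions is well defined and an isomorphism. -/
theorem stmt16 (G₁ G₂ : Type*) [Group G₁] [Group G₂] [Finite G₁] [Finite G₂] :
    (∀ x ∈ Br2Sub (G₁ × G₂),
      (res2 (MonoidHom.inl G₁ G₂) x, res2 (MonoidHom.inr G₁ G₂) x)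
        ∈ (Br2Sub G₁).prod (Br2Sub G₂)) ∧
    (∀ x ∈ Br2Sub (G₁ × G₂),
      res2 (MonoidHom.inl G₁ G₂) x = 1 → res2 (MonoidHom.inr G₁ G₂) x = 1 → x = 1) ∧
    (∀ y ∈ (Br2Sub G₁).prod (Br2Sub G₂), ∃ x ∈ Br2Sub (G₁ × G₂),
      (res2 (MonoidHom.inl G₁ G₂) x, res2 (MonoidHom.inr G₁ G₂) x) = y) := by
  constructor
  · -- well-definedness
    rintro x ⟨ω, hωmem, rfl⟩
    simp only [SetLike.mem_coe, Subgroup.mem_subgroupOf] at hωmem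
    rw [Subgroup.mem_prod]
    constructor
    · refine ⟨res2Cocycle (MonoidHom.inl G₁ G₂) ω, Subgroup.mem_subgroupOf.mpr
        ⟨(res2Cocycle (MonoidHom.inl G₁ G₂) ω).2, ?_⟩, rfl⟩
      intro a b hab
      exact hωmem.2 (a,1) (b,1) (by simp [Prod.mk_mul_mk, hab])
    · refine ⟨res2Cocycle (MonoidHom.inr G₁ G₂) ω, Subgroup.mem_subgroupOf.mpr
        ⟨(res2Cocycle (MonoidHom.inr G₁ G₂) ω).2, ?_⟩, rfl⟩
      intro a b hab
      exact hωmem.2 (1,a) (1,b) (by simp [Prod.mk_mul_mk, hab])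
  constructor
  · -- injectivity
    rintro x ⟨ω, hωmem, rfl⟩ h1 h2
    simp only [SetLike.mem_coe, Subgroup.mem_subgroupOf] at hωmem
    have c1 : IsCoboundary2 (fun a b : G₁ => (ω : G₁ × G₂ → G₁ × G₂ → Circle) (a,1) (b,1)) := by
      have hm := (QuotientGroup.eq_one_iff _).mp h1
      rw [Subgroup.mem_subgroupOf] at hm
      exact (dt_mem_cob_iff _).mp hm
    have c2 : IsCoboundary2 (fun a b : G₂ => (ω : G₁ × G₂ → G₁ × G₂ → Circle) (1,a) (1,b)) := by
      have hm := (QuotientGroup.eq_one_iff _).mp h2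
      rw [Subgroup.mem_subgroupOf] at hm
      exact (dt_mem_cob_iff _).mp hm
    have hcob := dt_core (ω : G₁ × G₂ → G₁ × G₂ → Circle) ω.2 hωmem.2 c1 c2
    exact (QuotientGroup.eq_one_iff _).mpr
      (Subgroup.mem_subgroupOf.mpr ((dt_mem_cob_iff _).mpr hcob))
  · -- surjectivity
    rintro ⟨y₁, y₂⟩ hy
    rw [Subgroup.mem_prod] at hy
    obtain ⟨ω₁, hω₁, rfl⟩ := hy.1
    obtain ⟨ω₂, hω₂, rfl⟩ := hy.2
    simp only [SetLike.mem_coe, Subgroup.mem_subgroupOf] at hω₁ hω₂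
    have hΩc : IsCocycle2 (fun g h : G₁ × G₂ =>
        (ω₁ : G₁ → G₁ → Circle) g.1 h.1 * (ω₂ : G₂ → G₂ → Circle) g.2 h.2) := by
      intro g₁ g₂ g₃
      simp only [Prod.fst_mul, Prod.snd_mul]
      rw [mul_mul_mul_comm, ω₁.2 g₁.1 g₂.1 g₃.1, ω₂.2 g₁.2 g₂.2 g₃.2, mul_mul_mul_comm]
    set Ω : cocycles2Sub (G₁ × G₂) := ⟨fun g h : G₁ × G₂ =>
      (ω₁ : G₁ → G₁ → Circle) g.1 h.1 * (ω₂ : G₂ → G₂ → Circle) g.2 h.2, hΩc⟩ with hΩ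
    have hΩu : Untwisted2 (Ω : (G₁ × G₂) → (G₁ × G₂) → Circle) := by
      intro g h hgh
      have h1 : g.1 * h.1 = h.1 * g.1 := by rw [← Prod.fst_mul, hgh, Prod.fst_mul]
      have h2 : g.2 * h.2 = h.2 * g.2 := by rw [← Prod.snd_mul, hgh, Prod.snd_mul]
      show (ω₁ : G₁ → G₁ → Circle) g.1 h.1 * (ω₂ : G₂ → G₂ → Circle) g.2 h.2 = _
      rw [hω₁.2 g.1 h.1 h1, hω₂.2 g.2 h.2 h2]
    refine ⟨QuotientGroup.mk' _ Ω, ⟨Ω, Subgroup.mem_subgroupOf.mpr ⟨hΩc, hΩu⟩, rfl⟩, ?_⟩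
    have e1 : res2 (MonoidHom.inl G₁ G₂) (QuotientGroup.mk' _ Ω)
        = QuotientGroup.mk (res2Cocycle (MonoidHom.inl G₁ G₂) Ω) := rfl
    have e2 : res2 (MonoidHom.inr G₁ G₂) (QuotientGroup.mk' _ Ω)
        = QuotientGroup.mk (res2Cocycle (MonoidHom.inr G₁ G₂) Ω) := rfl
    have m1 : (res2Cocycle (MonoidHom.inl G₁ G₂) Ω)⁻¹ * ω₁
        ∈ (coboundaries2Sub G₁).subgroupOf (cocycles2Sub G₁) := by
      rw [Subgroup.mem_subgroupOf]
      refine (dt_mem_cob_iff _).mpr ⟨fun _ => ((ω₂ : G₂ → G₂ → Circle) 1 1)⁻¹, ?_⟩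
      intro a b
      show ((ω₁ : G₁ → G₁ → Circle) a b * (ω₂ : G₂ → G₂ → Circle) 1 1)⁻¹
          * (ω₁ : G₁ → G₁ → Circle) a b = _
      rw [← Circle.coe_inj]
      push_cast
      field_simp
    have m2 : (res2Cocycle (MonoidHom.inr G₁ G₂) Ω)⁻¹ * ω₂
        ∈ (coboundaries2Sub G₂).subgroupOf (cocycles2Sub G₂) := by
      rw [Subgroup.mem_subgroupOf]
      refine (dt_mem_cob_iff _).mpr ⟨fun _ => ((ω₁ : G₁ → G₁ → Circle) 1 1)⁻¹, ?_⟩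
      intro a b
      show ((ω₁ : G₁ → G₁ → Circle) 1 1 * (ω₂ : G₂ → G₂ → Circle) a b)⁻¹
          * (ω₂ : G₂ → G₂ → Circle) a b = _
      rw [← Circle.coe_inj]
      push_cast
      field_simp
    refine Prod.ext ?_ ?_
    · show res2 (MonoidHom.inl G₁ G₂) (QuotientGroup.mk' _ Ω) = QuotientGroup.mk' _ ω₁
      rw [e1]
      exact QuotientGroup.eq.mpr m1
    · show res2 (MonoidHom.inr G₁ G₂) (QuotientGroup.mk' _ Ω) = QuotientGroup.mk' _ ω₂
      rw [e2]
      exact QuotientGroup.eq.mpr m2
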